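/- Let φ : ℝ² → ℝ be twice continuously differentiable with compact support contained in the open unit disc D1, and let f = d d⊥ φ be the symmetric 2-tensor field with components f11 = −∂²φ/∂x1∂x2, f12 = (1/2)(∂²φ/∂x1² − ∂²φ/∂x2²), f22 = ∂²φ/∂x1∂x2. Then for every x ∈ ℝ²: φ(x) = (1/(2 u2)) ∫₀^∞ Lf(x + s e1) ds = −(1/(2 u2)) ∫₀^∞ Tf(x + s e1) ds. -/

import Mathlib

noncomputable section

open MeasureTheory

/-- The divergent beam transform `X_w h (x) = ∫₀^∞ h(x + t w) dt`. -/
def Xbeam (w : ℝ × ℝ) (h : ℝ × ℝ → ℝ) (x : ℝ × ℝ) : ℝ :=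
  ∫ t in Set.Ioi (0 : ℝ), h (x + t • w)

/-- The k-th moment divergent beam transform `X_w^k h (x) = ∫₀^∞ t^k h(x + t w) dt`. -/
def Xmom (k : ℕ) (w : ℝ × ℝ) (h : ℝ × ℝ → ℝ) (x : ℝ × ℝ) : ℝ :=
  ∫ t in Set.Ioi (0 : ℝ), t ^ k * h (x + t • w)

/-- The directional derivative `D_w h = w ⋅ ∇h`. -/
def Dir (w : ℝ × ℝ) (h : ℝ × ℝ → ℝ) (x : ℝ × ℝ) : ℝ :=
  fderiv ℝ h x w

/-- Support contained in the open unit disc `D1`. -/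
def SuppInDisc (h : ℝ × ℝ → ℝ) : Prop :=
  ∀ x : ℝ × ℝ, 1 ≤ x.1 ^ 2 + x.2 ^ 2 → h x = 0

/-- The longitudinal V-line transform. -/
def VlineL (u1 u2 : ℝ) (f11 f12 f22 : ℝ × ℝ → ℝ) : ℝ × ℝ → ℝ :=
  Xbeam (u1, u2) (fun y => u1 ^ 2 * f11 y + 2 * u1 * u2 * f12 y + u2 ^ 2 * f22 y)
    + Xbeam (-u1, u2) (fun y => u1 ^ 2 * f11 y - 2 * u1 * u2 * f12 y + u2 ^ 2 * f22 y)

/-- The transverse V-line transform. -/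
def VlineT (u1 u2 : ℝ) (f11 f12 f22 : ℝ × ℝ → ℝ) : ℝ × ℝ → ℝ :=
  Xbeam (u1, u2) (fun y => u2 ^ 2 * f11 y - 2 * u1 * u2 * f12 y + u1 ^ 2 * f22 y)
    + Xbeam (-u1, u2) (fun y => u2 ^ 2 * f11 y + 2 * u1 * u2 * f12 y + u1 ^ 2 * f22 y)

/-- The mixed V-line transform. -/
def VlineM (u1 u2 : ℝ) (f11 f12 f22 : ℝ × ℝ → ℝ) : ℝ × ℝ → ℝ :=
  Xbeam (u1, u2) (fun y => -(u1 * u2) * f11 y + (u1 ^ 2 - u2 ^ 2) * f12 y + u1 * u2 * f22 y)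
    + Xbeam (-u1, u2) (fun y => u1 * u2 * f11 y + (u1 ^ 2 - u2 ^ 2) * f12 y - u1 * u2 * f22 y)

/-- The k-th moment longitudinal V-line transform. -/
def VlineLk (k : ℕ) (u1 u2 : ℝ) (f11 f12 f22 : ℝ × ℝ → ℝ) : ℝ × ℝ → ℝ :=
  Xmom k (u1, u2) (fun y => u1 ^ 2 * f11 y + 2 * u1 * u2 * f12 y + u2 ^ 2 * f22 y)
    + Xmom k (-u1, u2) (fun y => u1 ^ 2 * f11 y - 2 * u1 * u2 * f12 y + u2 ^ 2 * f22 y)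

/-- The k-th moment transverse V-line transform. -/
def VlineTk (k : ℕ) (u1 u2 : ℝ) (f11 f12 f22 : ℝ × ℝ → ℝ) : ℝ × ℝ → ℝ :=
  Xmom k (u1, u2) (fun y => u2 ^ 2 * f11 y - 2 * u1 * u2 * f12 y + u1 ^ 2 * f22 y)
    + Xmom k (-u1, u2) (fun y => u2 ^ 2 * f11 y + 2 * u1 * u2 * f12 y + u1 ^ 2 * f22 y)

/-- The k-th moment mixed V-line transform. -/
def VlineMk (k : ℕ) (u1 u2 : ℝ) (f11 f12 f22 : ℝ × ℝ → ℝ) : ℝ × ℝ → ℝ :=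
  Xmom k (u1, u2) (fun y => -(u1 * u2) * f11 y + (u1 ^ 2 - u2 ^ 2) * f12 y + u1 * u2 * f22 y)
    + Xmom k (-u1, u2) (fun y => u1 * u2 * f11 y + (u1 ^ 2 - u2 ^ 2) * f12 y - u1 * u2 * f22 y)


lemma ftc_half (g : ℝ × ℝ → ℝ) (hg : ContDiff ℝ 1 g)
    (hz : ∀ y : ℝ × ℝ, 2 ≤ y.1 ^ 2 + y.2 ^ 2 → g y = 0)
    (w : ℝ × ℝ) (hw : 0 < w.1 ^ 2 + w.2 ^ 2) (x : ℝ × ℝ) :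
    ∫ t in Set.Ioi (0 : ℝ), fderiv ℝ g (x + t • w) w = -g x := by
  set c : ℝ := w.1 ^ 2 + w.2 ^ 2 with hc
  set b : ℝ := x.1 * w.1 + x.2 * w.2 with hb
  set T : ℝ := max 1 ((2 * |b| + 3) / c) with hT
  have hT1 : (1 : ℝ) ≤ T := le_max_left _ _
  have hT2 : (2 * |b| + 3) / c ≤ T := le_max_right _ _
  have escape : ∀ t : ℝ, T ≤ |t| → 2 < (x + t • w).1 ^ 2 + (x + t • w).2 ^ 2 := by
    intro t ht
    have h1 : 1 ≤ |t| := le_trans hT1 ht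
    have h2 : 2 * |b| + 3 ≤ c * |t| := by
      have h2' : 2 * |b| + 3 ≤ T * c := (div_le_iff₀ hw).mp hT2
      nlinarith [mul_le_mul_of_nonneg_right ht (le_of_lt hw)]
    have h3 : -( |t| * |b| ) ≤ t * b := by
      have := abs_mul t b
      have := neg_abs_le (t * b)
      nlinarith [abs_mul t b, neg_abs_le (t * b)]
    have hcomp : (x + t • w).1 = x.1 + t * w.1 ∧ (x + t • w).2 = x.2 + t * w.2 := by
      simp [Prod.smul_def, smul_eq_mul]
    rw [hcomp.1, hcomp.2]
    have e1 : (x.1 + t * w.1) ^ 2 + (x.2 + t * w.2) ^ 2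
        = c * t ^ 2 + 2 * (t * b) + (x.1 ^ 2 + x.2 ^ 2) := by rw [hc, hb]; ring
    have e2 : c * t ^ 2 = (c * |t|) * |t| := by rw [← sq_abs t]; ring
    nlinarith [e1, e2, mul_le_mul_of_nonneg_right h2 (abs_nonneg t), h3, h1,
      sq_nonneg x.1, sq_nonneg x.2]
  have hdiffg : Differentiable ℝ g := hg.differentiable one_ne_zero
  have hzero' : ∀ y : ℝ × ℝ, 2 < y.1 ^ 2 + y.2 ^ 2 → fderiv ℝ g y = 0 := by
    intro y hy
    have hopen : IsOpen {z : ℝ × ℝ | 2 < z.1 ^ 2 + z.2 ^ 2} :=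
      isOpen_lt continuous_const ((continuous_fst.pow 2).add (continuous_snd.pow 2))
    have hev : g =ᶠ[nhds y] (fun _ => (0 : ℝ)) :=
      Filter.eventually_of_mem (hopen.mem_nhds hy) (fun z hz' => hz z (le_of_lt hz'))
    rw [hev.fderiv_eq, fderiv_fun_const]
    rfl
  set F : ℝ → ℝ := fun t => fderiv ℝ g (x + t • w) w with hF
  have hline : ∀ t : ℝ, HasDerivAt (fun s : ℝ => x + s • w) w t := by
    intro t
    simpa using ((hasDerivAt_id t).smul_const w).const_add x
  have hderiv : ∀ t : ℝ, HasDerivAt (fun s : ℝ => g (x + s • w)) (F t) t := fun t =>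
    (hdiffg (x + t • w)).hasFDerivAt.comp_hasDerivAt t (hline t)
  have hFzero : ∀ t : ℝ, T ≤ |t| → F t = 0 := by
    intro t ht
    rw [hF]
    simp only [hzero' _ (escape t ht)]
    rfl
  have hcontF : Continuous F := by
    have h1 : Continuous (fderiv ℝ g) := hg.continuous_fderiv one_ne_zero
    have h2 : Continuous (fun t : ℝ => x + t • w) := continuous_const.add (continuous_id.smul continuous_const)
    exact ((ContinuousLinearMap.apply ℝ ℝ w).continuous).comp (h1.comp h2)
  have hcs : HasCompactSupport F := by
    apply HasCompactSupport.intro (isCompact_Icc (a := -T) (b := T))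
    intro t ht
    apply hFzero
    simp only [Set.mem_Icc, not_and_or, not_le] at ht
    rcases ht with h | h
    · rw [abs_of_nonpos (by linarith)]; linarith
    · rw [abs_of_nonneg (by linarith)]; linarith
  have hint : IntegrableOn F (Set.Ioi 0) volume :=
    (hcontF.integrable_of_hasCompactSupport hcs).integrableOn
  have htend : Filter.Tendsto (fun s : ℝ => g (x + s • w)) Filter.atTop (nhds 0) := by
    apply Filter.Tendsto.congr' _ tendsto_const_nhds
    filter_upwards [Filter.eventually_ge_atTop T] with t ht
    have : T ≤ |t| := le_trans ht (le_abs_self t)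
    exact (hz _ (le_of_lt (escape t this))).symm
  have := integral_Ioi_of_hasDerivAt_of_tendsto' (f := fun s : ℝ => g (x + s • w)) (f' := F)
    (a := 0) (fun t _ => hderiv t) hint htend
  rw [this]
  simp

/-- reconstruction of a potential `φ` with `f = d d⊥ φ` from `Lf` or `Tf`. -/
theorem recover_potential_ddperp
    (u1 u2 : ℝ) (hu : u1 ^ 2 + u2 ^ 2 = 1) (hu1 : 0 < u1) (hu2 : 0 < u2)
    (φ : ℝ × ℝ → ℝ) (hφ : ContDiff ℝ 2 φ) (hsupp : SuppInDisc φ)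
    (f11 f12 f22 : ℝ × ℝ → ℝ)
    (hf11 : ∀ y : ℝ × ℝ, f11 y =
      -fderiv ℝ (fun z => fderiv ℝ φ z ((0 : ℝ), (1 : ℝ))) y ((1 : ℝ), (0 : ℝ)))
    (hf12 : ∀ y : ℝ × ℝ, f12 y =
      (1 / 2) * (fderiv ℝ (fun z => fderiv ℝ φ z ((1 : ℝ), (0 : ℝ))) y ((1 : ℝ), (0 : ℝ)) -
        fderiv ℝ (fun z => fderiv ℝ φ z ((0 : ℝ), (1 : ℝ))) y ((0 : ℝ), (1 : ℝ))))
    (hf22 : ∀ y : ℝ × ℝ, f22 y =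
      fderiv ℝ (fun z => fderiv ℝ φ z ((0 : ℝ), (1 : ℝ))) y ((1 : ℝ), (0 : ℝ)))
    (x : ℝ × ℝ) :
    φ x = (1 / (2 * u2)) * Xbeam ((1 : ℝ), (0 : ℝ)) (VlineL u1 u2 f11 f12 f22) x ∧
    φ x = -(1 / (2 * u2)) * Xbeam ((1 : ℝ), (0 : ℝ)) (VlineT u1 u2 f11 f12 f22) x := by
  have hd1 : Differentiable ℝ φ := hφ.differentiable (by norm_num)
  have hd2 : ContDiff ℝ 1 (fderiv ℝ φ) := hφ.fderiv_right (by norm_num)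
  have hd2' : Differentiable ℝ (fderiv ℝ φ) := hd2.differentiable one_ne_zero
  have hpd : ∀ (e y : ℝ × ℝ), HasFDerivAt (fun z => fderiv ℝ φ z e)
      ((ContinuousLinearMap.apply ℝ ℝ e).comp (fderiv ℝ (fderiv ℝ φ) y)) y := fun e y =>
    (ContinuousLinearMap.apply ℝ ℝ e).hasFDerivAt.comp y (hd2' y).hasFDerivAt
  have hpf : ∀ (e y v : ℝ × ℝ), fderiv ℝ (fun z => fderiv ℝ φ z e) y v
      = fderiv ℝ (fderiv ℝ φ) y v e := fun e y v => by
    rw [(hpd e y).fderiv]; rfl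
  have hsym : ∀ (y v w' : ℝ × ℝ), fderiv ℝ (fderiv ℝ φ) y v w'
      = fderiv ℝ (fderiv ℝ φ) y w' v := fun y v w' =>
    second_derivative_symmetric (fun z => (hd1 z).hasFDerivAt) ((hd2' y).hasFDerivAt) v w'
  -- vanishing of fderiv φ far away
  have hfz : ∀ y : ℝ × ℝ, 2 ≤ y.1 ^ 2 + y.2 ^ 2 → fderiv ℝ φ y = 0 := by
    intro y hy
    have hopen : IsOpen {z : ℝ × ℝ | 1 < z.1 ^ 2 + z.2 ^ 2} :=
      isOpen_lt continuous_const ((continuous_fst.pow 2).add (continuous_snd.pow 2))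
    have hev : φ =ᶠ[nhds y] (fun _ => (0 : ℝ)) :=
      Filter.eventually_of_mem (hopen.mem_nhds (by simp only [Set.mem_setOf_eq]; linarith))
        (fun z hz' => hsupp z (le_of_lt hz'))
    rw [hev.fderiv_eq, fderiv_fun_const]; rfl
  set gu : ℝ × ℝ → ℝ :=
    fun z => -u1 * fderiv ℝ φ z ((0:ℝ),(1:ℝ)) + u2 * fderiv ℝ φ z ((1:ℝ),(0:ℝ)) with hgu
  set gv : ℝ × ℝ → ℝ :=
    fun z => u1 * fderiv ℝ φ z ((0:ℝ),(1:ℝ)) + u2 * fderiv ℝ φ z ((1:ℝ),(0:ℝ)) with hgv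
  have hpc : ∀ e : ℝ × ℝ, ContDiff ℝ 1 (fun z => fderiv ℝ φ z e) := fun e =>
    hd2.clm_apply contDiff_const
  have hguC : ContDiff ℝ 1 gu :=
    (contDiff_const.mul (hpc _)).add (contDiff_const.mul (hpc _))
  have hgvC : ContDiff ℝ 1 gv :=
    (contDiff_const.mul (hpc _)).add (contDiff_const.mul (hpc _))
  have hguz : ∀ y : ℝ × ℝ, 2 ≤ y.1 ^ 2 + y.2 ^ 2 → gu y = 0 := by
    intro y hy; rw [hgu]; simp [hfz y hy]
  have hgvz : ∀ y : ℝ × ℝ, 2 ≤ y.1 ^ 2 + y.2 ^ 2 → gv y = 0 := by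
    intro y hy; rw [hgv]; simp [hfz y hy]
  have hfgu : ∀ z v : ℝ × ℝ, fderiv ℝ gu z v =
      -u1 * (fderiv ℝ (fderiv ℝ φ) z v ((0:ℝ),(1:ℝ)))
        + u2 * (fderiv ℝ (fderiv ℝ φ) z v ((1:ℝ),(0:ℝ))) := by
    intro z v
    have h1 := ((hpd ((0:ℝ),(1:ℝ)) z).const_mul (-u1)).add ((hpd ((1:ℝ),(0:ℝ)) z).const_mul u2)
    rw [hgu, HasFDerivAt.fderiv (f := fun y => -u1 * fderiv ℝ φ y ((0:ℝ),(1:ℝ)) + u2 * fderiv ℝ φ y ((1:ℝ),(0:ℝ))) h1]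
    simp [ContinuousLinearMap.smul_apply]
  have hfgv : ∀ z v : ℝ × ℝ, fderiv ℝ gv z v =
      u1 * (fderiv ℝ (fderiv ℝ φ) z v ((0:ℝ),(1:ℝ)))
        + u2 * (fderiv ℝ (fderiv ℝ φ) z v ((1:ℝ),(0:ℝ))) := by
    intro z v
    have h1 := ((hpd ((0:ℝ),(1:ℝ)) z).const_mul u1).add ((hpd ((1:ℝ),(0:ℝ)) z).const_mul u2)
    rw [hgv, HasFDerivAt.fderiv (f := fun y => u1 * fderiv ℝ φ y ((0:ℝ),(1:ℝ)) + u2 * fderiv ℝ φ y ((1:ℝ),(0:ℝ))) h1]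
    simp [ContinuousLinearMap.smul_apply]
  have hdecu : ((u1, u2) : ℝ × ℝ) = u1 • ((1:ℝ),(0:ℝ)) + u2 • ((0:ℝ),(1:ℝ)) := by
    simp [Prod.ext_iff]
  have hdecv : ((-u1, u2) : ℝ × ℝ) = (-u1) • ((1:ℝ),(0:ℝ)) + u2 • ((0:ℝ),(1:ℝ)) := by
    simp [Prod.ext_iff]
  have hLu : ∀ z : ℝ × ℝ,
      u1 ^ 2 * f11 z + 2 * u1 * u2 * f12 z + u2 ^ 2 * f22 z
        = fderiv ℝ gu z ((u1, u2) : ℝ × ℝ) := by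
    intro z
    rw [hf11 z, hf12 z, hf22 z, hfgu, hdecu]
    simp only [hpf, map_add, _root_.map_smul, ContinuousLinearMap.add_apply,
      ContinuousLinearMap.smul_apply, ContinuousLinearMap.coe_smul', Pi.smul_apply, smul_eq_mul]
    linear_combination (u2 ^ 2) * (hsym z ((1:ℝ),(0:ℝ)) ((0:ℝ),(1:ℝ)))
  have hLv : ∀ z : ℝ × ℝ,
      u1 ^ 2 * f11 z - 2 * u1 * u2 * f12 z + u2 ^ 2 * f22 z
        = fderiv ℝ gv z ((-u1, u2) : ℝ × ℝ) := by
    intro z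
    rw [hf11 z, hf12 z, hf22 z, hfgv, hdecv]
    simp only [hpf, map_add, _root_.map_smul, ContinuousLinearMap.add_apply,
      ContinuousLinearMap.smul_apply, ContinuousLinearMap.coe_smul', Pi.smul_apply, smul_eq_mul]
    linear_combination (u2 ^ 2) * (hsym z ((1:ℝ),(0:ℝ)) ((0:ℝ),(1:ℝ)))
  have hXu : ∀ y : ℝ × ℝ, Xbeam ((u1, u2) : ℝ × ℝ)
      (fun z => u1 ^ 2 * f11 z + 2 * u1 * u2 * f12 z + u2 ^ 2 * f22 z) y = -gu y := by
    intro y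
    have h0 := ftc_half gu hguC hguz ((u1, u2) : ℝ × ℝ) (by simp only; nlinarith) y
    rw [Xbeam, ← h0]
    exact integral_congr_ae (.of_forall fun t => hLu _)
  have hXv : ∀ y : ℝ × ℝ, Xbeam ((-u1, u2) : ℝ × ℝ)
      (fun z => u1 ^ 2 * f11 z - 2 * u1 * u2 * f12 z + u2 ^ 2 * f22 z) y = -gv y := by
    intro y
    have h0 := ftc_half gv hgvC hgvz ((-u1, u2) : ℝ × ℝ) (by simp only; nlinarith) y
    rw [Xbeam, ← h0]
    exact integral_congr_ae (.of_forall fun t => hLv _)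
  have hL : ∀ y : ℝ × ℝ, VlineL u1 u2 f11 f12 f22 y
      = -(2 * u2) * fderiv ℝ φ y ((1:ℝ),(0:ℝ)) := by
    intro y
    have : VlineL u1 u2 f11 f12 f22 y = -gu y + -gv y := by
      rw [VlineL, Pi.add_apply, hXu y, hXv y]
    rw [this, hgu, hgv]; ring
  have hφz : ∀ y : ℝ × ℝ, 2 ≤ y.1 ^ 2 + y.2 ^ 2 → φ y = 0 := fun y hy =>
    hsupp y (by linarith)
  have hXL : Xbeam ((1:ℝ),(0:ℝ)) (VlineL u1 u2 f11 f12 f22) x = 2 * u2 * φ x := by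
    have h0 := ftc_half φ (hφ.of_le (by norm_num)) hφz ((1:ℝ),(0:ℝ)) (by norm_num) x
    rw [Xbeam]
    calc ∫ t in Set.Ioi (0:ℝ), VlineL u1 u2 f11 f12 f22 (x + t • ((1:ℝ),(0:ℝ)))
        = ∫ t in Set.Ioi (0:ℝ),
            -(2 * u2) * fderiv ℝ φ (x + t • ((1:ℝ),(0:ℝ))) ((1:ℝ),(0:ℝ)) :=
          integral_congr_ae (.of_forall fun t => hL _)
      _ = -(2 * u2) * ∫ t in Set.Ioi (0:ℝ),
            fderiv ℝ φ (x + t • ((1:ℝ),(0:ℝ))) ((1:ℝ),(0:ℝ)) := integral_const_mul _ _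
      _ = -(2 * u2) * (-φ x) := by rw [h0]
      _ = 2 * u2 * φ x := by ring
  have hf1122 : ∀ z : ℝ × ℝ, f22 z = -f11 z := fun z => by rw [hf11 z, hf22 z]; ring
  have hXT : Xbeam ((1:ℝ),(0:ℝ)) (VlineT u1 u2 f11 f12 f22) x
      = -Xbeam ((1:ℝ),(0:ℝ)) (VlineL u1 u2 f11 f12 f22) x := by
    have hTL : ∀ y : ℝ × ℝ, VlineT u1 u2 f11 f12 f22 y = -VlineL u1 u2 f11 f12 f22 y := by
      intro y
      have h1 : Xbeam ((u1, u2) : ℝ × ℝ)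
          (fun z => u2 ^ 2 * f11 z - 2 * u1 * u2 * f12 z + u1 ^ 2 * f22 z) y
          = -Xbeam ((u1, u2) : ℝ × ℝ)
            (fun z => u1 ^ 2 * f11 z + 2 * u1 * u2 * f12 z + u2 ^ 2 * f22 z) y := by
        rw [Xbeam, Xbeam, ← integral_neg]
        refine integral_congr_ae (.of_forall fun t => ?_)
        simp only []
        rw [hf1122]; ring
      have h2 : Xbeam ((-u1, u2) : ℝ × ℝ)
          (fun z => u2 ^ 2 * f11 z + 2 * u1 * u2 * f12 z + u1 ^ 2 * f22 z) y
          = -Xbeam ((-u1, u2) : ℝ × ℝ)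
            (fun z => u1 ^ 2 * f11 z - 2 * u1 * u2 * f12 z + u2 ^ 2 * f22 z) y := by
        rw [Xbeam, Xbeam, ← integral_neg]
        refine integral_congr_ae (.of_forall fun t => ?_)
        simp only []
        rw [hf1122]; ring
      rw [VlineT, VlineL, Pi.add_apply, Pi.add_apply, h1, h2]; ring
    rw [Xbeam, Xbeam, ← integral_neg]
    exact integral_congr_ae (.of_forall fun t => hTL _)
  constructor
  · rw [hXL]; field_simp
  · rw [hXT, hXL]; field_simp
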